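/- Let G be a bipartite graph with n left vertices, each of degree exactly d, and m' right vertices, and let 2 ≤ k ≤ n. Suppose that every nonempty set S of left vertices with |S| ≤ k satisfies |N(S)| > (d/2)|S|. Then 2^{m'} ≥ Σ_{i=0}^{⌊k/2⌋} binom(n, i); consequently m' ≥ ⌊k/2⌋·log₂(2n/k). -/

import Mathlib

lemma aux_choose : ∀ (r n : ℕ), r ≤ n → ((n : ℝ) / r) ^ r ≤ n.choose r := by
  intro r
  induction r with
  | zero => intro n _; simp
  | succ r ih =>
    intro n hn
    obtain ⟨m, rfl⟩ : ∃ m, n = m + 1 := ⟨n - 1, by omega⟩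
    have hrm : r ≤ m := by omega
    have h1 : ((m + 1 : ℝ) / (r + 1)) ^ r ≤ ((m : ℝ) / r) ^ r := by
      rcases Nat.eq_zero_or_pos r with h | h
      · subst h; simp
      · apply pow_le_pow_left₀ (by positivity)
        rw [div_le_div_iff₀ (by positivity) (by exact_mod_cast h)]
        have : (r : ℝ) ≤ m := by exact_mod_cast hrm
        nlinarith
    have h2 : ((m : ℝ) / r) ^ r ≤ m.choose r := ih m hrm
    have key : ((m + 1 : ℝ)) * m.choose r = (m + 1).choose (r + 1) * (r + 1) := by
      exact_mod_cast congrArg (Nat.cast : ℕ → ℝ) (Nat.add_one_mul_choose_eq m r)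
    calc ((↑(m+1) : ℝ) / (↑(r+1))) ^ (r+1)
        = ((m + 1 : ℝ) / (r + 1)) * ((m + 1 : ℝ) / (r + 1)) ^ r := by push_cast; ring
      _ ≤ ((m + 1 : ℝ) / (r + 1)) * (m.choose r) := by
          apply mul_le_mul_of_nonneg_left (h1.trans h2) (by positivity)
      _ = ((m+1).choose (r+1) : ℝ) := by
          rw [div_mul_eq_mul_div, key]
          field_simp

lemma aux_count (n r : ℕ) :
    ((Finset.univ : Finset (Finset (Fin n))).filter (fun S => S.card ≤ r)).card
      = ∑ i ∈ Finset.range (r + 1), n.choose i := by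
  have : (Finset.univ : Finset (Finset (Fin n))).filter (fun S => S.card ≤ r)
      = (Finset.range (r + 1)).biUnion
          (fun i => (Finset.univ : Finset (Fin n)).powersetCard i) := by
    ext S
    simp [Finset.mem_powersetCard, Nat.lt_succ_iff]
  rw [this, Finset.card_biUnion]
  · apply Finset.sum_congr rfl
    intro i _
    simp [Finset.card_powersetCard]
  · intro i _ j _ hij
    simp only [Finset.disjoint_left, Finset.mem_powersetCard]
    rintro S ⟨-, rfl⟩ ⟨-, h⟩
    exact hij (h ▸ rfl)

/- STATEMENT 1: A bipartite graph with `n` left vertices, each of degree exactly `d`, and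
`m'` right vertices, such that every nonempty set `S` of at most `k` left vertices satisfies
`|N(S)| > (d/2)|S|`, must have `2^{m'} ≥ ∑_{i=0}^{⌊k/2⌋} C(n,i)`; consequently
`m' ≥ ⌊k/2⌋ · log₂(2n/k)`. -/
open Classical in
theorem stmt1 (n m' d k : ℕ) (hk2 : 2 ≤ k) (hkn : k ≤ n)
    (Adj : Fin n → Fin m' → Prop)
    (hdeg : ∀ j : Fin n,
      ((Finset.univ : Finset (Fin m')).filter (fun i => Adj j i)).card = d)
    (hexp : ∀ S : Finset (Fin n), S.Nonempty → S.card ≤ k →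
      (d : ℝ) / 2 * S.card <
        (((Finset.univ : Finset (Fin m')).filter (fun i => ∃ j ∈ S, Adj j i)).card : ℝ)) :
    (∑ i ∈ Finset.range (k / 2 + 1), n.choose i) ≤ 2 ^ m' ∧
      ((k / 2 : ℕ) : ℝ) * Real.logb 2 (2 * n / k) ≤ (m' : ℝ) := by
  set r := k / 2 with hr
  -- unique neighbor property
  have uniq : ∀ U : Finset (Fin n), U.Nonempty → U.card ≤ k →
      ∃ i : Fin m', (U.filter (fun j => Adj j i)).card = 1 := by
    intro U hne hUk
    by_contra hcon
    push_neg at hcon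
    set N := (Finset.univ : Finset (Fin m')).filter (fun i => ∃ j ∈ U, Adj j i) with hN
    have hsum : ∑ i : Fin m', (U.filter (fun j => Adj j i)).card = d * U.card := by
      simp_rw [Finset.card_filter]
      rw [Finset.sum_comm]
      simp_rw [← Finset.card_filter, hdeg]
      simp [mul_comm]
    have hrestrict : ∑ i ∈ N, (U.filter (fun j => Adj j i)).card
        = ∑ i : Fin m', (U.filter (fun j => Adj j i)).card := by
      apply Finset.sum_subset (Finset.subset_univ _)
      intro i _ hiN
      rw [Finset.card_eq_zero, Finset.filter_eq_empty_iff]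
      intro j hj hadj
      exact hiN (by simp [hN]; exact ⟨j, hj, hadj⟩)
    have hge : 2 * N.card ≤ ∑ i ∈ N, (U.filter (fun j => Adj j i)).card := by
      calc 2 * N.card = ∑ _i ∈ N, 2 := by rw [Finset.sum_const]; ring
        _ ≤ _ := by
          apply Finset.sum_le_sum
          intro i hi
          simp only [hN, Finset.mem_filter] at hi
          obtain ⟨-, j, hj, hadj⟩ := hi
          have h1 : 1 ≤ (U.filter (fun j => Adj j i)).card := by
            rw [Nat.one_le_iff_ne_zero, ← Nat.pos_iff_ne_zero, Finset.card_pos]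
            exact ⟨j, Finset.mem_filter.2 ⟨hj, hadj⟩⟩
          have := hcon i
          omega
    have hlt := hexp U hne hUk
    have h2 : (d : ℝ) * U.card < 2 * N.card := by linarith
    have h3 : 2 * N.card ≤ d * U.card := by rw [hrestrict, hsum] at hge; exact hge
    have : (2 * N.card : ℝ) ≤ (d * U.card : ℝ) := by exact_mod_cast h3
    linarith
  -- Part 1 via injectivity of the syndrome map
  have hcard1 : (∑ i ∈ Finset.range (r + 1), n.choose i) ≤ 2 ^ m' := by
    rw [← aux_count n r]
    have hinj : Set.InjOn
        (fun S : Finset (Fin n) => (Finset.univ : Finset (Fin m')).filter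
          (fun i => Odd ((S.filter (fun j => Adj j i)).card)))
        ((Finset.univ : Finset (Finset (Fin n))).filter (fun S => S.card ≤ r)) := by
      intro S hS T hT hf
      simp only [Finset.coe_filter, Set.mem_setOf_eq] at hS hT
      by_contra hST
      set U := (S \ T) ∪ (T \ S) with hU
      have hUne : U.Nonempty := by
        rw [Finset.nonempty_iff_ne_empty]
        intro h
        rw [hU, Finset.union_eq_empty] at h
        exact hST (le_antisymm (Finset.sdiff_eq_empty_iff_subset.1 h.1)
          (Finset.sdiff_eq_empty_iff_subset.1 h.2))
      have hUcard : U.card ≤ k := by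
        show (S \ T ∪ T \ S).card ≤ k
        have := Finset.card_union_le (S \ T) (T \ S)
        have h1 := Finset.card_le_card (Finset.sdiff_subset (s := S) (t := T))
        have h2 := Finset.card_le_card (Finset.sdiff_subset (s := T) (t := S))
        omega
      obtain ⟨i, hi⟩ := uniq U hUne hUcard
      set p : Fin n → Prop := fun j => Adj j i with hp
      have hdisjST : Disjoint (S \ T) (T \ S) := disjoint_sdiff_sdiff
      have hUsplit : ((S \ T).filter p).card + ((T \ S).filter p).card = 1 := by
        rw [← Finset.card_union_of_disjoint
          (Finset.disjoint_filter_filter hdisjST), ← Finset.filter_union]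
        exact hi
      have hSsplit : (S.filter p).card
          = ((S \ T).filter p).card + ((S ∩ T).filter p).card := by
        rw [← Finset.card_union_of_disjoint (Finset.disjoint_filter_filter
          (Finset.disjoint_sdiff_inter S T)), ← Finset.filter_union,
          Finset.sdiff_union_inter]
      have hTsplit : (T.filter p).card
          = ((T \ S).filter p).card + ((T ∩ S).filter p).card := by
        rw [← Finset.card_union_of_disjoint (Finset.disjoint_filter_filter
          (Finset.disjoint_sdiff_inter T S)), ← Finset.filter_union,
          Finset.sdiff_union_inter]
      rw [Finset.inter_comm] at hTsplit
      have hparity : Odd ((S.filter p).card) ↔ Odd ((T.filter p).card) := by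
        have := Finset.ext_iff.1 hf i
        simpa using this
      rw [Nat.odd_iff, Nat.odd_iff] at hparity
      omega
    have hmaps : ∀ S ∈ ((Finset.univ : Finset (Finset (Fin n))).filter
        (fun S => S.card ≤ r)),
        (Finset.univ : Finset (Fin m')).filter
          (fun i => Odd ((S.filter (fun j => Adj j i)).card))
        ∈ (Finset.univ : Finset (Finset (Fin m'))) := fun _ _ => Finset.mem_univ _
    have := Finset.card_le_card_of_injOn _ hmaps hinj
    simpa using this
  refine ⟨hcard1, ?_⟩
  -- Part 2
  have hn2 : 2 ≤ n := le_trans hk2 hkn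
  have hr1 : 1 ≤ r := by omega
  have hrn : r ≤ n := by omega
  have hkpos : (0 : ℝ) < k := by exact_mod_cast (by omega : 0 < k)
  have hrpos : (0 : ℝ) < r := by exact_mod_cast hr1
  have h2rk : (2 * r : ℝ) ≤ k := by exact_mod_cast (by omega : 2 * r ≤ k)
  have hb : (2 * n / k : ℝ) ≤ (n : ℝ) / r := by
    rw [div_le_div_iff₀ hkpos hrpos]
    have hn0 : (0 : ℝ) ≤ n := by positivity
    nlinarith
  have hchoose := aux_choose r n hrn
  have hsum_le : ((n.choose r : ℝ)) ≤ (2 : ℝ) ^ m' := by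
    have h1 : n.choose r ≤ ∑ i ∈ Finset.range (r + 1), n.choose i :=
      Finset.single_le_sum (f := fun i => n.choose i) (fun _ _ => Nat.zero_le _)
        (Finset.self_mem_range_succ r)
    have h2 : n.choose r ≤ 2 ^ m' := le_trans h1 hcard1
    exact_mod_cast h2
  have hle : ((2 * n / k : ℝ)) ^ r ≤ (2 : ℝ) ^ m' := by
    calc ((2 * n / k : ℝ)) ^ r ≤ ((n : ℝ) / r) ^ r := by
          apply pow_le_pow_left₀ (by positivity) hb
      _ ≤ (n.choose r : ℝ) := hchoose
      _ ≤ (2 : ℝ) ^ m' := hsum_le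
  have hbase : (2 : ℝ) ≤ 2 * n / k := by
    rw [le_div_iff₀ hkpos]
    have : (k : ℝ) ≤ n := by exact_mod_cast hkn
    nlinarith
  have hpos : (0 : ℝ) < ((2 * n / k : ℝ)) ^ r := by positivity
  have hlog := Real.logb_le_logb_of_le (by norm_num : (1 : ℝ) < 2) hpos hle
  rw [Real.logb_pow, Real.logb_pow, Real.logb_self_eq_one (by norm_num : (1:ℝ) < 2),
    mul_one] at hlog
  exact_mod_cast hlog
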